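/- arXiv:0711.0708 — 2 statements merged into one kernel-verified Lean document; each statement's English description precedes it below -/
import Mathlib

section
/- Let r ∈ F_q^{n×m}, L̂ ∈ F_q^{n×μ}, Ê ∈ F_q^{δ×m} and U ⊆ {1,…,n} satisfy: |U| = μ, I_U^T r = 0, I_U^T L̂ = −I_{μ×μ}, and rank Ê = δ. Let S ⊆ {1,…,n}, T ∈ F_q^{μ×μ} and R ∈ F_q^{δ×δ} be such that the tuple (r, L̂T, RÊ) together with the set S also satisfies these four conditions (i.e., |S| = μ, I_S^T r = 0, I_S^T(L̂T) = −I_{μ×μ}, rank(RÊ) = δ). Then the row space of the block matrix [[I_n + L̂T·I_S^T , r],[0 , RÊ]] equals the row space of [[I_n + L̂·I_U^T , r],[0 , Ê]]. -/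
open Matrix

/-- The row space of a matrix: the span of its rows. -/
noncomputable def rowSpace {F : Type*} [Field F] {ι κ : Type*}
    (M : Matrix ι κ F) : Submodule F (κ → F) :=
  Submodule.span F (Set.range fun i => M i)

/-- `I_U`: the `n × μ` matrix whose columns are the columns of the `n × n`
identity matrix indexed by the set `U` (in increasing order). -/
def unitColumns (F : Type*) [Field F] {n μ : ℕ}
    (U : Finset (Fin n)) (hU : U.card = μ) : Matrix (Fin n) (Fin μ) F :=
  Matrix.of fun i k => if i = U.orderEmbOfFin hU k then 1 else 0

/-- Left-multiplication can only shrink the row space. -/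
lemma rowSpace_mul_le {F : Type*} [Field F] {ι κ η : Type*} [Fintype ι] [Fintype κ]
    (P : Matrix ι κ F) (M : Matrix κ η F) :
    rowSpace (P * M) ≤ rowSpace M := by
  rw [rowSpace, rowSpace]
  change Submodule.span F (Set.range (P * M).row) ≤ Submodule.span F (Set.range M.row)
  rw [← range_vecMulLinear, ← range_vecMulLinear]
  rintro _ ⟨x, rfl⟩
  exact ⟨x ᵥ* P, by simp [Matrix.vecMulLinear_apply, Matrix.vecMul_vecMul]⟩

/-- if both `(r, L, E)` with `U` and `(r, L*T, R*E)` with `S`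
satisfy the reduction conditions, then the corresponding block matrices have
the same row space. -/
theorem reduction_independent_of_presentation
    {F : Type*} [Field F] [Fintype F] {n m μ δ : ℕ}
    (r : Matrix (Fin n) (Fin m) F) (L : Matrix (Fin n) (Fin μ) F)
    (E : Matrix (Fin δ) (Fin m) F)
    (U S : Finset (Fin n)) (hU : U.card = μ) (hS : S.card = μ)
    (T : Matrix (Fin μ) (Fin μ) F) (R : Matrix (Fin δ) (Fin δ) F)
    (h1 : (unitColumns F U hU)ᵀ * r = 0)
    (h2 : (unitColumns F U hU)ᵀ * L = -1)
    (h3 : E.rank = δ)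
    (h1' : (unitColumns F S hS)ᵀ * r = 0)
    (h2' : (unitColumns F S hS)ᵀ * (L * T) = -1)
    (h3' : (R * E).rank = δ) :
    rowSpace (Matrix.fromBlocks (1 + (L * T) * (unitColumns F S hS)ᵀ) r 0 (R * E))
      = rowSpace (Matrix.fromBlocks (1 + L * (unitColumns F U hU)ᵀ) r 0 E) := by
  set Iu := unitColumns F U hU with hIu
  set Is := unitColumns F S hS with hIs
  set A1 := 1 + (L * T) * Isᵀ with hA1
  set B1 := 1 + L * Iuᵀ with hB1
  -- T has a two-sided inverse -(Isᵀ * L)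
  have hTleft : (-(Isᵀ * L)) * T = 1 := by
    have : Isᵀ * L * T = -1 := by rw [Matrix.mul_assoc]; exact h2'
    rw [Matrix.neg_mul, this, neg_neg]
  have hTright : T * (-(Isᵀ * L)) = 1 := by
    rwa [mul_eq_one_comm] at hTleft
  have hTIs : T * (Isᵀ * L) = -1 := by
    have := congrArg Neg.neg hTright
    rwa [← Matrix.mul_neg, neg_neg] at this
  -- key annihilation identities
  have hA1L : A1 * L = 0 := by
    rw [hA1, Matrix.add_mul, Matrix.one_mul, Matrix.mul_assoc (L * T),
      Matrix.mul_assoc L T, hTIs, Matrix.mul_neg, Matrix.mul_one, add_neg_cancel]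
  have hB1L : B1 * L = 0 := by
    rw [hB1, Matrix.add_mul, Matrix.one_mul, Matrix.mul_assoc, h2,
      Matrix.mul_neg, Matrix.mul_one, add_neg_cancel]
  have hA1r : A1 * r = r := by
    rw [hA1, Matrix.add_mul, Matrix.one_mul, Matrix.mul_assoc, h1',
      Matrix.mul_zero, add_zero]
  have hB1r : B1 * r = r := by
    rw [hB1, Matrix.add_mul, Matrix.one_mul, Matrix.mul_assoc, h1,
      Matrix.mul_zero, add_zero]
  have hA1B1 : A1 * B1 = A1 := by
    rw [hB1, Matrix.mul_add, Matrix.mul_one, ← Matrix.mul_assoc, hA1L,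
      Matrix.zero_mul, add_zero]
  have hB1A1 : B1 * A1 = B1 := by
    rw [hA1, Matrix.mul_add, Matrix.mul_one, ← Matrix.mul_assoc,
      ← Matrix.mul_assoc, hB1L, Matrix.zero_mul, Matrix.zero_mul, add_zero]
  -- R is invertible
  have hRu : IsUnit R := by
    have hrank : R.rank = δ :=
      le_antisymm (R.rank_le_card_width.trans_eq (Fintype.card_fin δ))
        (le_trans (le_of_eq h3'.symm) (Matrix.rank_mul_le_left R E))
    rw [← Matrix.mulVec_surjective_iff_isUnit]
    have htop : LinearMap.range R.mulVecLin = ⊤ := by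
      apply Submodule.eq_top_of_finrank_eq
      rw [← Matrix.rank, hrank]
      simp
    intro y
    obtain ⟨x, hx⟩ := (LinearMap.range_eq_top.mp htop) y
    exact ⟨x, by simpa [Matrix.mulVecLin_apply] using hx⟩
  have hRdet : IsUnit R.det := (Matrix.isUnit_iff_isUnit_det R).mp hRu
  have hRinv : R⁻¹ * (R * E) = E := by
    rw [← Matrix.mul_assoc, Matrix.nonsing_inv_mul R hRdet, Matrix.one_mul]
  apply le_antisymm
  · have hfact : Matrix.fromBlocks A1 r 0 (R * E)
        = Matrix.fromBlocks A1 0 0 R * Matrix.fromBlocks B1 r 0 E := by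
      rw [Matrix.fromBlocks_multiply]
      simp [hA1B1, hA1r]
    rw [hfact]
    exact rowSpace_mul_le _ _
  · have hfact : Matrix.fromBlocks B1 r 0 E
        = Matrix.fromBlocks B1 0 0 R⁻¹ * Matrix.fromBlocks A1 r 0 (R * E) := by
      rw [Matrix.fromBlocks_multiply]
      simp [hB1A1, hB1r, hRinv]
    rw [hfact]
    exact rowSpace_mul_le _ _
end

section
/- Let e ∈ F_q^{n×m}, L̂ ∈ F_q^{n×μ} with rank L̂ = μ, and Ê ∈ F_q^{δ×m} with rank Ê = δ. Then rank [[L̂ , e],[0 , Ê]] equals the minimum integer τ for which there exist column vectors L_1,…,L_τ ∈ F_q^{n} and row vectors E_1,…,E_τ ∈ F_q^{1×m} such that e = Σ_{j=1}^{τ} L_j E_j, L_j equals the j-th column of L̂ for j = 1,…,μ, and E_{μ+j} equals the j-th row of Ê for j = 1,…,δ. -/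
open Matrix

lemma submodule_finrank_prod {R M N : Type*} [Field R] [AddCommGroup M] [Module R M]
    [AddCommGroup N] [Module R N] [FiniteDimensional R M] [FiniteDimensional R N]
    (p : Submodule R M) (q : Submodule R N) :
    Module.finrank R (p.prod q) = Module.finrank R p + Module.finrank R q := by
  have eqv : (p.prod q) ≃ₗ[R] p × q :=
    { toFun := fun x => (⟨x.1.1, x.2.1⟩, ⟨x.1.2, x.2.2⟩)
      invFun := fun y => ⟨(y.1.1, y.2.1), ⟨y.1.2, y.2.2⟩⟩
      left_inv := fun x => rfl
      right_inv := fun y => rfl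
      map_add' := fun x y => rfl
      map_smul' := fun c x => rfl }
  rw [eqv.finrank_eq, Module.finrank_prod]

lemma range_prodMap' {R M N P Q : Type*} [CommRing R] [AddCommGroup M] [Module R M]
    [AddCommGroup N] [Module R N] [AddCommGroup P] [Module R P] [AddCommGroup Q] [Module R Q]
    (f : M →ₗ[R] P) (g : N →ₗ[R] Q) :
    LinearMap.range (f.prodMap g) = (LinearMap.range f).prod (LinearMap.range g) := by
  ext ⟨x, y⟩
  simp only [LinearMap.mem_range, Submodule.mem_prod, LinearMap.prodMap_apply, Prod.mk.injEq,
    Prod.exists]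
  constructor
  · rintro ⟨a, b, h1, h2⟩; exact ⟨⟨a, h1⟩, ⟨b, h2⟩⟩
  · rintro ⟨⟨a, h1⟩, ⟨b, h2⟩⟩; exact ⟨a, b, h1, h2⟩

lemma rank_fromBlocks_diag {F : Type*} [Field F] {p s r t : Type*}
    [Fintype p] [Fintype s] [Fintype r] [Fintype t] [DecidableEq p] [DecidableEq s]
    (X : Matrix p r F) (Y : Matrix s t F) :
    (fromBlocks X 0 0 Y).rank = X.rank + Y.rank := by
  classical
  have h : (fromBlocks X 0 0 Y).mulVecLin
      = (LinearEquiv.sumArrowLequivProdArrow p s F F).symm.toLinearMap ∘ₗ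
        ((X.mulVecLin.prodMap Y.mulVecLin) ∘ₗ
          (LinearEquiv.sumArrowLequivProdArrow r t F F).toLinearMap) := by
    apply LinearMap.ext
    intro v
    funext i
    cases i <;>
      simp [Matrix.mulVecLin_apply, Matrix.fromBlocks_mulVec,
        LinearEquiv.sumArrowLequivProdArrow, Equiv.sumArrowEquivProdArrow]
  rw [Matrix.rank, h]
  rw [LinearMap.range_comp, LinearMap.range_comp,
    LinearEquiv.range, Submodule.map_top, LinearEquiv.finrank_map_eq,
    range_prodMap', submodule_finrank_prod]
  rfl

lemma exists_left_inverse_of_rank {F : Type*} [Field F] {n μ : ℕ}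
    (L : Matrix (Fin n) (Fin μ) F) (hL : L.rank = μ) :
    ∃ L' : Matrix (Fin μ) (Fin n) F, L' * L = 1 := by
  have hker : LinearMap.ker L.mulVecLin = ⊥ := by
    have h1 := LinearMap.finrank_range_add_finrank_ker L.mulVecLin
    rw [Matrix.rank] at hL
    simp only [Module.finrank_pi, Fintype.card_fin] at h1
    have h0 : Module.finrank F (LinearMap.ker L.mulVecLin) = 0 := by omega
    exact Submodule.finrank_eq_zero.mp h0
  obtain ⟨g, hg⟩ := LinearMap.exists_leftInverse_of_injective L.mulVecLin hker
  refine ⟨LinearMap.toMatrix' g, ?_⟩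
  apply Matrix.toLin'.injective
  have : Matrix.toLin' (LinearMap.toMatrix' g * L) = (Matrix.toLin' (LinearMap.toMatrix' g)).comp
      (Matrix.toLin' L) := Matrix.toLin'_mul _ _
  rw [this, Matrix.toLin'_toMatrix', Matrix.toLin'_one]
  exact hg

lemma exists_rank_factorization {F : Type*} [Field F] {n m : ℕ}
    (f : Matrix (Fin n) (Fin m) F) :
    ∃ (A : Matrix (Fin n) (Fin f.rank) F) (B : Matrix (Fin f.rank) (Fin m) F), f = A * B := by
  classical
  set V := LinearMap.range f.mulVecLin with hV
  have hfr : Module.finrank F V = f.rank := rfl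
  let b : Module.Basis (Fin f.rank) F V := Module.finBasisOfFinrankEq F V hfr
  have hcol : ∀ k : Fin m, (fun i => f i k) ∈ V := by
    intro k
    refine ⟨Pi.single k 1, ?_⟩
    funext i
    simp [Matrix.mulVecLin_apply, Matrix.mulVec, dotProduct, Pi.single_apply,
      mul_ite, Finset.sum_ite_eq']
  refine ⟨fun i j => (b j : Fin n → F) i, fun j k => b.repr ⟨fun i => f i k, hcol k⟩ j, ?_⟩
  ext i k
  have h := congrFun (congrArg (Subtype.val) (b.sum_repr ⟨fun i => f i k, hcol k⟩)) i
  erw [Matrix.mul_apply]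
  have h2 : f i k = (⟨fun i => f i k, hcol k⟩ : V).val i := rfl
  rw [h2, ← h]
  simp only [AddSubmonoidClass.coe_finset_sum, SetLike.val_smul, Finset.sum_apply,
    Pi.smul_apply, smul_eq_mul]
  exact Finset.sum_congr rfl fun j _ => mul_comm _ _

lemma fromRows_add' {R m₁ m₂ n : Type*} [Add R] (A₁ : Matrix m₁ n R) (A₂ : Matrix m₂ n R)
    (B₁ : Matrix m₁ n R) (B₂ : Matrix m₂ n R) :
    fromRows A₁ A₂ + fromRows B₁ B₂ = fromRows (A₁ + B₁) (A₂ + B₂) := by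
  ext (i | i) j <;> simp

lemma fromColumns_add' {R m n₁ n₂ : Type*} [Add R] (A₁ : Matrix m n₁ R) (A₂ : Matrix m n₂ R)
    (B₁ : Matrix m n₁ R) (B₂ : Matrix m n₂ R) :
    fromCols A₁ A₂ + fromCols B₁ B₂ = fromCols (A₁ + B₁) (A₂ + B₂) := by
  ext i (j | j) <;> simp

lemma key_rank_ineq {F : Type*} [Field F] {n m μ δ : ℕ}
    (e : Matrix (Fin n) (Fin m) F)
    (L : Matrix (Fin n) (Fin μ) F) (L' : Matrix (Fin μ) (Fin n) F) (hL' : L' * L = 1)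
    (E : Matrix (Fin δ) (Fin m) F) (E' : Matrix (Fin m) (Fin δ) F) (hE' : E * E' = 1) :
    μ + δ + (e - L * (L' * e) - ((e - L * (L' * e)) * E') * E).rank
      ≤ (Matrix.fromBlocks L e 0 E).rank := by
  classical
  set M := Matrix.fromBlocks L e 0 E with hM
  set C := L' * e with hC
  set D := (e - L * C) * E' with hD
  set f := e - L * C - D * E with hf
  have hL'D : L' * D = 0 := by
    have h1 : L' * D = (L' * e - L' * L * C) * E' := by
      rw [hD, ← Matrix.mul_assoc, Matrix.mul_sub, ← Matrix.mul_assoc]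
    rw [h1, hL', Matrix.one_mul, ← hC, sub_self, Matrix.zero_mul]
  have hfE' : f * E' = 0 := by
    have h1 : f * E' = (e - L * C) * E' - D * (E * E') := by
      rw [hf, Matrix.sub_mul, Matrix.mul_assoc]
    rw [h1, hE', Matrix.mul_one, ← hD, sub_self]
  have h1LL'D : (1 - L * L') * D = D := by
    rw [Matrix.sub_mul, Matrix.one_mul, Matrix.mul_assoc, hL'D, Matrix.mul_zero, sub_zero]
  set P : Matrix (Fin μ ⊕ (Fin n ⊕ Fin δ)) (Fin n ⊕ Fin δ) F :=
    fromBlocks L' 0 (fromRows (1 - L * L') 0) (fromRows (-D) 1) with hP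
  set Q : Matrix (Fin μ ⊕ Fin m) (Fin μ ⊕ (Fin m ⊕ Fin δ)) F :=
    fromBlocks 1 (fromCols (-(C * (1 - E' * E))) (-(C * E'))) 0 (fromCols (1 - E' * E) E')
    with hQ
  have step1 : P * M = fromBlocks 1 C 0 (fromRows f E) := by
    rw [hP, hM, fromBlocks_multiply, fromBlocks_inj]
    refine ⟨?_, ?_, ?_, ?_⟩
    · rw [hL', Matrix.zero_mul, add_zero]
    · rw [Matrix.zero_mul, add_zero, hC]
    · rw [Matrix.mul_zero, add_zero, fromRows_mul]
      have : (1 - L * L') * L = 0 := by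
        rw [Matrix.sub_mul, Matrix.one_mul, Matrix.mul_assoc, hL', Matrix.mul_one, sub_self]
      rw [this, Matrix.zero_mul, fromRows_zero]
    · rw [fromRows_mul, fromRows_mul, fromRows_add', Matrix.zero_mul, Matrix.one_mul, zero_add]
      have hcomp : (1 - L * L') * e + (-D) * E = f := by
        rw [Matrix.sub_mul, Matrix.one_mul, Matrix.neg_mul, hf, Matrix.mul_assoc, ← hC]
        abel
      rw [hcomp]
  have step2 : P * M * Q = fromBlocks 1 0 0 (fromBlocks f 0 0 1) := by
    rw [step1, hQ, fromBlocks_multiply, fromBlocks_inj]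
    refine ⟨?_, ?_, ?_, ?_⟩
    · rw [Matrix.one_mul, Matrix.mul_zero, add_zero]
    · rw [Matrix.one_mul, mul_fromCols, fromColumns_add']
      rw [neg_add_cancel, neg_add_cancel, fromCols_zero]
    · rw [Matrix.zero_mul, Matrix.mul_zero, add_zero]
    · rw [Matrix.zero_mul, zero_add, fromRows_mul_fromCols]
      have hf1 : f * (1 - E' * E) = f := by
        rw [Matrix.mul_sub, Matrix.mul_one, ← Matrix.mul_assoc, hfE', Matrix.zero_mul, sub_zero]
      have hE1 : E * (1 - E' * E) = 0 := by
        rw [Matrix.mul_sub, Matrix.mul_one, ← Matrix.mul_assoc, hE', Matrix.one_mul, sub_self]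
      rw [hf1, hfE', hE1, hE']
  have hle : (P * M * Q).rank ≤ M.rank :=
    le_trans (Matrix.rank_mul_le_left (P * M) Q) (Matrix.rank_mul_le_right P M)
  rw [step2, rank_fromBlocks_diag, rank_fromBlocks_diag, Matrix.rank_one, Matrix.rank_one,
    Fintype.card_fin, Fintype.card_fin] at hle
  omega

lemma rank_le_of_decomp {F : Type*} [Field F] {n m μ δ τ : ℕ}
    (e : Matrix (Fin n) (Fin m) F) (L : Matrix (Fin n) (Fin μ) F)
    (E : Matrix (Fin δ) (Fin m) F)
    (Lv : ℕ → Fin n → F) (Ev : ℕ → Fin m → F)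
    (hsum : e = ∑ j ∈ Finset.range τ, Matrix.of (fun i k => Lv j i * Ev j k))
    (hLc : ∀ j : Fin μ, ∀ i, Lv j i = L i j)
    (hEc : ∀ j : Fin δ, ∀ k, Ev (μ + (j : ℕ)) k = E j k)
    (hτ : μ + δ ≤ τ) :
    (Matrix.fromBlocks L e 0 E).rank ≤ τ := by
  classical
  set A : Matrix (Fin n ⊕ Fin δ) (Fin τ) F :=
    Matrix.of (fun p j => match p with
      | Sum.inl i => Lv (j : ℕ) i
      | Sum.inr i => if (j : ℕ) = μ + (i : ℕ) then (1 : F) else 0) with hA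
  set B : Matrix (Fin τ) (Fin μ ⊕ Fin m) F :=
    Matrix.of (fun j q => match q with
      | Sum.inl s => if (j : ℕ) = (s : ℕ) then (1 : F) else 0
      | Sum.inr k => Ev (j : ℕ) k) with hB
  have hfact : Matrix.fromBlocks L e 0 E = A * B := by
    ext p q
    cases p with
    | inl i =>
      cases q with
      | inl s =>
        have hs : (s : ℕ) < τ := lt_of_lt_of_le (lt_of_lt_of_le s.2 (Nat.le_add_right μ δ)) hτ
        rw [Matrix.mul_apply]
        simp only [hA, hB, Matrix.of_apply, mul_ite, mul_one, mul_zero]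
        have hcond : ∀ x : Fin τ, ((x : ℕ) = (s : ℕ)) = (x = (⟨s, hs⟩ : Fin τ)) :=
          fun x => by rw [Fin.ext_iff]
        simp_rw [hcond]
        rw [Finset.sum_ite_eq' Finset.univ (⟨s, hs⟩ : Fin τ) (fun x => Lv (x : ℕ) i)]
        simp only [Finset.mem_univ, if_true, fromBlocks_apply₁₁]
        exact (hLc s i).symm
      | inr k =>
        rw [Matrix.mul_apply]
        simp only [hA, hB, Matrix.of_apply, fromBlocks_apply₁₂]
        rw [hsum, Matrix.sum_apply]
        simp only [Matrix.of_apply]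
        exact (Fin.sum_univ_eq_sum_range (fun j => Lv j i * Ev j k) τ).symm
    | inr i =>
      cases q with
      | inl s =>
        rw [Matrix.mul_apply]
        simp only [hA, hB, Matrix.of_apply, fromBlocks_apply₂₁, ite_mul, one_mul, zero_mul,
          Matrix.zero_apply]
        rw [Finset.sum_eq_zero]
        intro j _
        split_ifs with h1 h2
        · exact absurd (h1 ▸ h2) (by omega)
        · rfl
        · rfl
      | inr k =>
        have hi : μ + (i : ℕ) < τ := lt_of_lt_of_le (by omega) hτ
        rw [Matrix.mul_apply]
        simp only [hA, hB, Matrix.of_apply, fromBlocks_apply₂₂, ite_mul, one_mul, zero_mul]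
        have hcond : ∀ x : Fin τ, ((x : ℕ) = μ + (i : ℕ)) = (x = (⟨μ + i, hi⟩ : Fin τ)) :=
          fun x => by rw [Fin.ext_iff]
        simp_rw [hcond]
        rw [Finset.sum_ite_eq' Finset.univ (⟨μ + i, hi⟩ : Fin τ) (fun x => Ev (x : ℕ) k)]
        simp only [Finset.mem_univ, if_true]
        exact (hEc i k).symm
  rw [hfact]
  exact le_trans (Matrix.rank_mul_le_left A B)
    (le_trans (Matrix.rank_le_card_width A) (le_of_eq (Fintype.card_fin τ)))

lemma decomp_exists {F : Type*} [Field F] {n m μ δ : ℕ}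
    (e : Matrix (Fin n) (Fin m) F) (L : Matrix (Fin n) (Fin μ) F)
    (C : Matrix (Fin μ) (Fin m) F) (D : Matrix (Fin n) (Fin δ) F)
    (E : Matrix (Fin δ) (Fin m) F) {r τ : ℕ}
    (Af : Matrix (Fin n) (Fin r) F) (Bf : Matrix (Fin r) (Fin m) F)
    (he : e = L * C + D * E + Af * Bf) (hτ : μ + δ + r ≤ τ) :
    ∃ (Lv : ℕ → Fin n → F) (Ev : ℕ → Fin m → F),
      e = ∑ j ∈ Finset.range τ, Matrix.of (fun i k => Lv j i * Ev j k) ∧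
      (∀ j : Fin μ, ∀ i, Lv j i = L i j) ∧
      (∀ j : Fin δ, ∀ k, Ev (μ + (j : ℕ)) k = E j k) := by
  classical
  set Lv : ℕ → Fin n → F := fun j i =>
    if h : j < μ then L i ⟨j, h⟩
    else if h' : j - μ < δ then D i ⟨j - μ, h'⟩
    else if h'' : j - μ - δ < r then Af i ⟨j - μ - δ, h''⟩ else 0 with hLv
  set Ev : ℕ → Fin m → F := fun j k =>
    if h : j < μ then C ⟨j, h⟩ k
    else if h' : j - μ < δ then E ⟨j - μ, h'⟩ k
    else if h'' : j - μ - δ < r then Bf ⟨j - μ - δ, h''⟩ k else 0 with hEv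
  refine ⟨Lv, Ev, ?_, ?_, ?_⟩
  · have htail : ∑ j ∈ Finset.range τ, Matrix.of (fun i k => Lv j i * Ev j k)
        = ∑ j ∈ Finset.range (μ + δ + r), Matrix.of (fun i k => Lv j i * Ev j k) := by
      symm
      apply Finset.sum_subset (Finset.range_subset_range.mpr hτ)
      intro j hjτ hj
      rw [Finset.mem_range] at hj
      push_neg at hj
      ext i k
      have h1 : ¬ j < μ := by omega
      have h2 : ¬ j - μ < δ := by omega
      have h3 : ¬ j - μ - δ < r := by omega
      simp only [Matrix.of_apply, hLv, hEv, h1, h2, h3, dif_neg, not_false_iff,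
        Matrix.zero_apply, zero_mul]
    rw [htail, Finset.sum_range_add, Finset.sum_range_add]
    rw [he]
    congr 1
    · congr 1
      · -- ∑ j ∈ range μ = L * C
        ext i k
        rw [Matrix.sum_apply, Matrix.mul_apply, ← Fin.sum_univ_eq_sum_range]
        apply Finset.sum_congr rfl
        intro j _
        simp only [Matrix.of_apply, hLv, hEv, j.2, dif_pos, Fin.eta]
      · -- ∑ j ∈ range δ, f (μ + j) = D * E
        ext i k
        rw [Matrix.sum_apply, Matrix.mul_apply, ← Fin.sum_univ_eq_sum_range]
        apply Finset.sum_congr rfl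
        intro j _
        have h1 : ¬ μ + (j : ℕ) < μ := by omega
        have h2 : μ + (j : ℕ) - μ < δ := by omega
        simp only [Matrix.of_apply, hLv, hEv, h1, dif_neg, not_false_iff, h2, dif_pos]
        have hjj : (⟨μ + (j : ℕ) - μ, h2⟩ : Fin δ) = j := Fin.ext (by simp)
        rw [hjj]
    · -- ∑ j ∈ range r, f (μ + δ + j) = Af * Bf
      ext i k
      rw [Matrix.sum_apply, Matrix.mul_apply, ← Fin.sum_univ_eq_sum_range]
      apply Finset.sum_congr rfl
      intro j _
      have h1 : ¬ μ + δ + (j : ℕ) < μ := by omega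
      have h2 : ¬ μ + δ + (j : ℕ) - μ < δ := by omega
      have h3 : μ + δ + (j : ℕ) - μ - δ < r := by omega
      simp only [Matrix.of_apply, hLv, hEv, h1, h2, dif_neg, not_false_iff, h3, dif_pos]
      have hjj : (⟨μ + δ + (j : ℕ) - μ - δ, h3⟩ : Fin r) = j := Fin.ext (by simp; omega)
      rw [hjj]
  · intro j i
    simp only [hLv, j.2, dif_pos, Fin.eta]
  · intro j k
    have h1 : ¬ μ + (j : ℕ) < μ := by omega
    have h2 : μ + (j : ℕ) - μ < δ := by omega
    simp only [hEv, h1, dif_neg, not_false_iff, h2, dif_pos]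
    have hjj : (⟨μ + (j : ℕ) - μ, h2⟩ : Fin δ) = j := Fin.ext (by simp)
    rw [hjj]


/-- for `e ∈ F_q^{n×m}`, `L ∈ F_q^{n×μ}` of rank `μ` and
`E ∈ F_q^{δ×m}` of rank `δ`, the rank of `[[L, e],[0, E]]` equals the least
`τ` for which `e = Σ_{j=1}^{τ} L_j E_j` with `L_j` the `j`-th column of `L`
for `j ≤ μ` and `E_{μ+j}` the `j`-th row of `E` for `j ≤ δ`. -/
theorem rank_block_eq_min_decomposition_length
    {F : Type*} [Field F] [Fintype F] {n m μ δ : ℕ}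
    (e : Matrix (Fin n) (Fin m) F)
    (L : Matrix (Fin n) (Fin μ) F) (hL : L.rank = μ)
    (E : Matrix (Fin δ) (Fin m) F) (hE : E.rank = δ) :
    (Matrix.fromBlocks L e 0 E).rank
      = sInf {τ : ℕ | μ + δ ≤ τ ∧
          ∃ (Lv : ℕ → Fin n → F) (Ev : ℕ → Fin m → F),
            e = ∑ j ∈ Finset.range τ, Matrix.of (fun i k => Lv j i * Ev j k) ∧
            (∀ j : Fin μ, ∀ i, Lv j i = L i j) ∧
            (∀ j : Fin δ, ∀ k, Ev (μ + (j : ℕ)) k = E j k)} := by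
  classical
  obtain ⟨L', hL'⟩ := exists_left_inverse_of_rank L hL
  have hEt : Eᵀ.rank = δ := by rw [Matrix.rank_transpose]; exact hE
  obtain ⟨G, hG⟩ := exists_left_inverse_of_rank Eᵀ hEt
  have hE' : E * Gᵀ = 1 := by
    have h := congrArg Matrix.transpose hG
    rwa [Matrix.transpose_mul, Matrix.transpose_transpose, Matrix.transpose_one] at h
  have key := key_rank_ineq e L L' hL' E Gᵀ hE'
  set C : Matrix (Fin μ) (Fin m) F := L' * e with hC
  set D : Matrix (Fin n) (Fin δ) F := (e - L * C) * Gᵀ with hD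
  set f : Matrix (Fin n) (Fin m) F := e - L * C - D * E with hf
  obtain ⟨Af, Bf, hAB⟩ := exists_rank_factorization f
  have he : e = L * C + D * E + Af * Bf := by
    rw [← hAB, hf]; abel
  obtain ⟨Lv, Ev, h1, h2, h3⟩ :=
    decomp_exists e L C D E Af Bf he (key : μ + δ + f.rank ≤ (Matrix.fromBlocks L e 0 E).rank)
  have hmem : (Matrix.fromBlocks L e 0 E).rank ∈ {τ : ℕ | μ + δ ≤ τ ∧
      ∃ (Lv : ℕ → Fin n → F) (Ev : ℕ → Fin m → F),
        e = ∑ j ∈ Finset.range τ, Matrix.of (fun i k => Lv j i * Ev j k) ∧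
        (∀ j : Fin μ, ∀ i, Lv j i = L i j) ∧
        (∀ j : Fin δ, ∀ k, Ev (μ + (j : ℕ)) k = E j k)} :=
    ⟨by omega, Lv, Ev, h1, h2, h3⟩
  apply le_antisymm
  · apply le_csInf ⟨_, hmem⟩
    rintro b ⟨hbge, Lv', Ev', hs, hl, hev⟩
    exact rank_le_of_decomp e L E Lv' Ev' hs hl hev hbge
  · exact Nat.sInf_le hmem
end
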